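/- There is an absolute constant c > 0 with the following property. For all integers n ≥ k ≥ 1 there exists a deterministic adaptive strategy σ (depending only on n) such that for every nonempty family F of subsets of {1,…,n} in which every member has at most k elements, and for every superadditive function g : ℕ → ℕ, the sequence of queries Y_1,…,Y_m made by σ when each query Y is answered by the truth value of "there exists W ∈ F with W ⊆ Y" satisfies ∑_{i=1}^m g(|Y_i|) ≤ c·k·g(2n), and σ halts with output a member of F. (Theorem 1, total-running-time part / Lemma 2, with oracle cost g(|Y|) per query of size |Y|.) -/

import Mathlib

/-- An action of a deterministic adaptive strategy over the universe
`{1,…,n}` (modelled as `Fin n`): either query a subset `Y`, or halt and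
output a subset `W`. -/
inductive WEAction (n : ℕ) where
  | query (Y : Finset (Fin n))
  | halt (W : Finset (Fin n))

/-- The transcript (list of Boolean answers received) after `i` steps of
running the strategy `σ` against the answer function `a`: at each step, if
`σ` queries `Y` the answer `a Y` is appended; once `σ` halts the transcript
no longer changes. -/
def WEtranscript {n : ℕ} (σ : List Bool → WEAction n)
    (a : Finset (Fin n) → Bool) : ℕ → List Bool
  | 0 => []
  | i + 1 =>
    match σ (WEtranscript σ a i) with
    | WEAction.query Y => WEtranscript σ a i ++ [a Y]
    | WEAction.halt _ => WEtranscript σ a i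

/-- The list of query sets made by the strategy `σ` against the answer
function `a` within the first `i` steps. -/
def WEqueries {n : ℕ} (σ : List Bool → WEAction n)
    (a : Finset (Fin n) → Bool) : ℕ → List (Finset (Fin n))
  | 0 => []
  | i + 1 =>
    match σ (WEtranscript σ a i) with
    | WEAction.query Y => WEqueries σ a i ++ [Y]
    | WEAction.halt _ => WEqueries σ a i

namespace WEProof

/-- dyadic block of width `w` and index `j`. -/
def blk (n w j : ℕ) : Finset (Fin n) := Finset.univ.filter (fun x => x.val / w = j)

def level (n w : ℕ) : List (Finset (Fin n)) := (List.range n).map (blk n w)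

def sched (n : ℕ) : ℕ → List (Finset (Fin n))
  | 0 => []
  | m + 1 => level n (2 ^ m) ++ sched n m

def exec {n : ℕ} (a : Finset (Fin n) → Bool) :
    Finset (Fin n) → List (Finset (Fin n)) → List (Finset (Fin n)) × Finset (Fin n)
  | U, [] => ([], U)
  | U, J :: l =>
    if (U ∩ J).Nonempty then
      ((U \ J) :: (exec a (if a (U \ J) then U \ J else U) l).1,
        (exec a (if a (U \ J) then U \ J else U) l).2)
    else exec a U l

def run {n : ℕ} : Finset (Fin n) → List (Finset (Fin n)) → List Bool → WEAction n
  | U, [], _ => .halt U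
  | U, J :: l, bs =>
    if (U ∩ J).Nonempty then
      match bs with
      | [] => .query (U \ J)
      | b :: bs' => run (if b then U \ J else U) l bs'
    else run U l bs

variable {n : ℕ} {a : Finset (Fin n) → Bool}

lemma exec_state_subset : ∀ (l : List (Finset (Fin n))) (U), (exec a U l).2 ⊆ U := by
  intro l
  induction l with
  | nil => intro U; simp [exec]
  | cons J l ih =>
    intro U
    by_cases h : (U ∩ J).Nonempty
    · simp only [exec, h, if_true]
      refine (ih _).trans ?_
      split <;> [exact Finset.sdiff_subset; exact subset_rfl]
    · simpa [exec, h] using ih U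

lemma exec_query_subset : ∀ (l : List (Finset (Fin n))) (U), ∀ Y ∈ (exec a U l).1, Y ⊆ U := by
  intro l
  induction l with
  | nil => intro U Y h; simp [exec] at h
  | cons J l ih =>
    intro U Y hY
    by_cases h : (U ∩ J).Nonempty
    · simp only [exec, h, if_true, List.mem_cons] at hY
      rcases hY with rfl | hY
      · exact Finset.sdiff_subset
      · refine (ih _ _ hY).trans ?_
        split <;> [exact Finset.sdiff_subset; exact subset_rfl]
    · simp only [exec, h, if_false] at hY
      exact ih U Y hY

lemma exec_append : ∀ (l₁ l₂ : List (Finset (Fin n))) (U),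
    exec a U (l₁ ++ l₂) =
      ((exec a U l₁).1 ++ (exec a (exec a U l₁).2 l₂).1, (exec a (exec a U l₁).2 l₂).2) := by
  intro l₁
  induction l₁ with
  | nil => intro l₂ U; simp [exec]
  | cons J l ih =>
    intro l₂ U
    by_cases h : (U ∩ J).Nonempty
    · simp [exec, h, ih]
    · simp [exec, h, ih]

lemma exec_cert : ∀ (l : List (Finset (Fin n))) (U J), J ∈ l →
    (((exec a U l).2 ∩ J).Nonempty) →
    ∃ U', (exec a U l).2 ⊆ U' ∧ U' ⊆ U ∧ a (U' \ J) = false := by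
  intro l
  induction l with
  | nil => intro U J h; simp at h
  | cons J' l ih =>
    intro U J hJ hne
    by_cases h : (U ∩ J').Nonempty
    · rcases List.mem_cons.mp hJ with rfl | hJ'
      · -- head is J
        by_cases ha : a (U \ J) = true
        · -- then state ⊆ U \ J, contradiction with hne
          exfalso
          have hs : (exec a U (J :: l)).2 ⊆ U \ J := by
            simp only [exec, h, if_true, ha, if_true]
            exact exec_state_subset l (U \ J)
          rcases hne with ⟨x, hx⟩
          rw [Finset.mem_inter] at hx
          have := hs hx.1
          rw [Finset.mem_sdiff] at this
          exact this.2 hx.2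
        · refine ⟨U, ?_, subset_rfl, by simpa using ha⟩
          have : (exec a U (J :: l)).2 ⊆ U := exec_state_subset _ _
          exact this
      · -- J in tail
        have h2 : (exec a U (J' :: l)).2 = (exec a (if a (U \ J') then U \ J' else U) l).2 := by
          simp [exec, h]
        rw [h2] at hne ⊢
        obtain ⟨U', h1, h2', h3⟩ := ih _ J hJ' hne
        refine ⟨U', h1, h2'.trans ?_, h3⟩
        split <;> [exact Finset.sdiff_subset; exact subset_rfl]
    · rcases List.mem_cons.mp hJ with rfl | hJ'
      · exfalso
        rcases hne with ⟨x, hx⟩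
        rw [Finset.mem_inter] at hx
        have := exec_state_subset (J :: l) U hx.1
        exact h ⟨x, Finset.mem_inter.mpr ⟨this, hx.2⟩⟩
      · have h2 : (exec a U (J' :: l)).2 = (exec a U l).2 := by simp [exec, h]
        rw [h2] at hne ⊢
        exact ih U J hJ' hne




/-- number of nonempty width-`w` blocks of `U`. -/
def Bcount (U : Finset (Fin n)) (w : ℕ) : ℕ := (U.image (fun x => x.val / w)).card

lemma card_le_Bcount_mul (U : Finset (Fin n)) (w : ℕ) (hw : 1 ≤ w) :
    U.card ≤ Bcount U w * w := by
  have : U.card ≤ ((U.image (fun x => x.val / w)) ×ˢ Finset.range w).card := by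
    apply Finset.card_le_card_of_injOn (fun x => (x.val / w, x.val % w))
    · intro x hx
      refine Finset.mem_product.mpr ⟨Finset.mem_image_of_mem _ hx, ?_⟩
      exact Finset.mem_range.mpr (Nat.mod_lt _ hw)
    · intro x _ y _ hxy
      have h1 : x.val / w = y.val / w := congrArg Prod.fst hxy
      have h2 : x.val % w = y.val % w := congrArg Prod.snd hxy
      have : x.val = y.val := by
        have hx1 := Nat.div_add_mod x.val w
        have hy1 := Nat.div_add_mod y.val w
        rw [h1, h2] at hx1
        omega
      exact Fin.ext this
  simpa [Bcount, Finset.card_product] using this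

lemma Bcount_double (U : Finset (Fin n)) (w : ℕ) :
    Bcount U w ≤ 2 * Bcount U (w * 2) := by
  have himg : (U.image (fun x => x.val / w)).image (fun j => j / 2)
      = U.image (fun x => x.val / (w * 2)) := by
    rw [Finset.image_image]
    congr 1
    funext x
    simp [Function.comp, Nat.div_div_eq_div_mul]
  have := Finset.card_le_mul_card_image (f := fun j => j / 2)
    (U.image (fun x => x.val / w)) 2 ?_
  · rw [himg] at this
    exact this
  · intro b _
    have hsub : ((U.image (fun x => x.val / w)).filter (fun j => j / 2 = b))
        ⊆ insert (2 * b) {2 * b + 1} := by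
      intro j hj
      have := (Finset.mem_filter.mp hj).2
      simp only [Finset.mem_insert, Finset.mem_singleton]
      omega
    calc _ ≤ (insert (2 * b) ({2 * b + 1} : Finset ℕ)).card := Finset.card_le_card hsub
    _ ≤ 2 := Finset.card_insert_le _ _ |>.trans (by simp)

lemma Bcount_le_div (U : Finset (Fin n)) (w : ℕ) :
    Bcount U w ≤ n / w + 1 := by
  have hsub : U.image (fun x => x.val / w) ⊆ Finset.range (n / w + 1) := by
    intro j hj
    obtain ⟨x, _, rfl⟩ := Finset.mem_image.mp hj
    have : x.val / w ≤ n / w := Nat.div_le_div_right (le_of_lt x.isLt)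
    exact Finset.mem_range.mpr (by omega)
  calc Bcount U w ≤ (Finset.range (n / w + 1)).card := Finset.card_le_card hsub
  _ = n / w + 1 := by simp

lemma Bcount_top (U : Finset (Fin n)) (R : ℕ) (hn : n ≤ 2 ^ R) :
    Bcount U (2 ^ R) ≤ 1 := by
  have hsub : U.image (fun x => x.val / 2 ^ R) ⊆ {0} := by
    intro j hj
    obtain ⟨x, _, rfl⟩ := Finset.mem_image.mp hj
    have : x.val < 2 ^ R := lt_of_lt_of_le x.isLt hn
    simp [Nat.div_eq_of_lt this]
  simpa [Bcount] using Finset.card_le_card hsub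

lemma Bcount_mono {U V : Finset (Fin n)} (h : U ⊆ V) (w : ℕ) :
    Bcount U w ≤ Bcount V w :=
  Finset.card_le_card (Finset.image_subset_image h)



variable {n : ℕ} {a : Finset (Fin n) → Bool}

lemma filter_len_mono {U V : Finset (Fin n)} (h : U ⊆ V) :
    ∀ l : List (Finset (Fin n)),
      (l.filter (fun J => decide ((U ∩ J).Nonempty))).length ≤
      (l.filter (fun J => decide ((V ∩ J).Nonempty))).length := by
  intro l
  induction l with
  | nil => simp
  | cons J l ih =>
    by_cases hU : (U ∩ J).Nonempty
    · have hV : (V ∩ J).Nonempty := by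
        rcases hU with ⟨x, hx⟩
        rw [Finset.mem_inter] at hx
        exact ⟨x, Finset.mem_inter.mpr ⟨h hx.1, hx.2⟩⟩
      simp [List.filter_cons, hU, hV]
      omega
    · by_cases hV : (V ∩ J).Nonempty <;>
        simp [List.filter_cons, hU, hV] <;>
        omega

lemma exec_len_le_filter : ∀ (l : List (Finset (Fin n))) (U),
    (exec a U l).1.length ≤ (l.filter (fun J => decide ((U ∩ J).Nonempty))).length := by
  intro l
  induction l with
  | nil => simp [exec]
  | cons J l ih =>
    intro U
    by_cases h : (U ∩ J).Nonempty
    · have h3 : (List.filter (fun J' => decide ((U ∩ J').Nonempty)) (J :: l)).length =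
          (List.filter (fun J' => decide ((U ∩ J').Nonempty)) l).length + 1 := by
        simp [List.filter_cons, h]
      simp only [exec, h, if_true, List.length_cons, h3]
      have h1 := ih (if a (U \ J) then U \ J else U)
      have h2 : ((l.filter (fun J' => decide (((if a (U \ J) then U \ J else U) ∩ J').Nonempty))).length) ≤
          (l.filter (fun J' => decide ((U ∩ J').Nonempty))).length := by
        apply filter_len_mono
        split <;> [exact Finset.sdiff_subset; exact subset_rfl]
      omega
    · have h3 : (List.filter (fun J' => decide ((U ∩ J').Nonempty)) (J :: l)) =
          List.filter (fun J' => decide ((U ∩ J').Nonempty)) l := by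
        simp [List.filter_cons, h]
      simp only [exec, h, if_false, h3]
      exact ih U

lemma exec_level_len (U : Finset (Fin n)) (w : ℕ) :
    (exec a U (level n w)).1.length ≤ Bcount U w := by
  refine (exec_len_le_filter _ _).trans ?_
  rw [level, List.filter_map, List.length_map]
  have hnd : ((List.range n).filter ((fun J => decide ((U ∩ J).Nonempty)) ∘ blk n w)).Nodup :=
    (List.nodup_range : (List.range n).Nodup).filter _
  rw [← List.toFinset_card_of_nodup hnd]
  apply Finset.card_le_card
  intro j hj
  rw [List.mem_toFinset, List.mem_filter] at hj
  obtain ⟨hjr, hjp⟩ := hj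
  have : (U ∩ blk n w j).Nonempty := by simpa using hjp
  obtain ⟨x, hx⟩ := this
  rw [Finset.mem_inter] at hx
  have hxb : x.val / w = j := by
    have := hx.2
    simp only [blk, Finset.mem_filter] at this
    exact this.2
  exact Finset.mem_image.mpr ⟨x, hx.1, hxb⟩

/-- the inclusion oracle for family `F`. -/
def ora (F : Finset (Finset (Fin n))) : Finset (Fin n) → Bool :=
  fun Y => decide (∃ W' ∈ F, W' ⊆ Y)

lemma exec_witness (F : Finset (Finset (Fin n))) :
    ∀ (l : List (Finset (Fin n))) (U), (∃ W ∈ F, W ⊆ U) →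
      ∃ W ∈ F, W ⊆ (exec (ora F) U l).2 := by
  intro l
  induction l with
  | nil => intro U h; simpa [exec] using h
  | cons J l ih =>
    intro U hU
    by_cases h : (U ∩ J).Nonempty
    · simp only [exec, h, if_true]
      by_cases ha : ora F (U \ J) = true
      · have : ∃ W ∈ F, W ⊆ U \ J := by simpa [ora] using ha
        simp only [ha, if_true]
        exact ih _ this
      · simp only [Bool.not_eq_true] at ha
        simp only [ha, Bool.false_eq_true, if_false]
        exact ih _ hU
    · simp only [exec, h, if_false]
      exact ih _ hU

lemma charge (F : Finset (Finset (Fin n))) (U W : Finset (Fin n)) (w : ℕ)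
    (hWF : W ∈ F) (hW : W ⊆ (exec (ora F) U (level n w)).2) :
    Bcount (exec (ora F) U (level n w)).2 w ≤ W.card := by
  set f := (exec (ora F) U (level n w)).2 with hf
  have hsub : f.image (fun x => x.val / w) ⊆ W.image (fun x => x.val / w) := by
    intro j hj
    obtain ⟨x, hxf, rfl⟩ := Finset.mem_image.mp hj
    have hJ : blk n w (x.val / w) ∈ level n w := by
      rw [level]
      exact List.mem_map.mpr ⟨x.val / w, List.mem_range.mpr
        (lt_of_le_of_lt (Nat.div_le_self _ _) x.isLt), rfl⟩
    have hne : (f ∩ blk n w (x.val / w)).Nonempty :=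
      ⟨x, Finset.mem_inter.mpr ⟨hxf, by simp [blk]⟩⟩
    obtain ⟨U', hfU', hU'U, hfalse⟩ := exec_cert (a := ora F) _ U _ hJ hne
    by_cases hWJ : (W ∩ blk n w (x.val / w)).Nonempty
    · obtain ⟨y, hy⟩ := hWJ
      rw [Finset.mem_inter] at hy
      have : y.val / w = x.val / w := by
        have := hy.2; simp only [blk, Finset.mem_filter] at this; exact this.2
      exact Finset.mem_image.mpr ⟨y, hy.1, this⟩
    · exfalso
      have hWsub : W ⊆ U' \ blk n w (x.val / w) := by
        intro y hy
        rw [Finset.mem_sdiff]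
        exact ⟨hfU' (hW hy), fun hyb => hWJ ⟨y, Finset.mem_inter.mpr ⟨hy, hyb⟩⟩⟩
      have hct : ora F (U' \ blk n w (x.val / w)) = true := by
        simp only [ora, decide_eq_true_eq]
        exact ⟨W, hWF, hWsub⟩
      rw [hfalse] at hct
      exact Bool.false_ne_true hct
  exact (Finset.card_le_card hsub).trans (Finset.card_image_le)



variable {n : ℕ} {a : Finset (Fin n) → Bool}

lemma run_halt : ∀ (l : List (Finset (Fin n))) (U),
    run U l ((exec a U l).1.map a) = .halt (exec a U l).2 := by
  intro l
  induction l with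
  | nil => intro U; simp [exec, run]
  | cons J l ih =>
    intro U
    by_cases h : (U ∩ J).Nonempty
    · simp only [exec, h, if_true, List.map_cons, run]
      exact ih _
    · simp only [exec, h, if_false, run]
      exact ih _

lemma run_query : ∀ (l : List (Finset (Fin n))) (U) (i : ℕ)
    (hi : i < (exec a U l).1.length),
    run U l (((exec a U l).1.map a).take i) = .query ((exec a U l).1[i]'hi) := by
  intro l
  induction l with
  | nil => intro U i hi; simp [exec] at hi
  | cons J l ih =>
    intro U i hi
    by_cases h : (U ∩ J).Nonempty
    · match i with
      | 0 => simp [exec, h, run]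
      | i + 1 =>
        have hi' : i < (exec a (if a (U \ J) then U \ J else U) l).1.length := by
          have := hi; simp only [exec, h, if_true, List.length_cons] at this; omega
        simp only [exec, h, if_true, List.map_cons, List.take_succ_cons,
          List.getElem_cons_succ, run]
        exact ih _ i hi'
    · simp only [exec, h, if_false, run] at hi ⊢
      exact ih _ i hi

lemma sim (σ : List Bool → WEAction n) (S : List (Finset (Fin n)))
    (hσ : σ = fun bs => run Finset.univ S bs) :
    ∀ i, i ≤ (exec a Finset.univ S).1.length →
      WEtranscript σ a i = ((exec a Finset.univ S).1.map a).take i ∧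
      WEqueries σ a i = (exec a Finset.univ S).1.take i := by
  set qs := (exec a Finset.univ S).1 with hqs
  intro i
  induction i with
  | zero => intro _; constructor <;> simp [WEtranscript, WEqueries]
  | succ i ih =>
    intro hi
    have hii : i ≤ qs.length := le_of_lt (Nat.lt_of_succ_le hi)
    obtain ⟨ht, hq⟩ := ih hii
    have hlt : i < qs.length := Nat.lt_of_succ_le hi
    have hrun : σ (WEtranscript σ a i) = .query (qs[i]'hlt) := by
      rw [ht, hσ]
      exact run_query S Finset.univ i hlt
    constructor
    · show (match σ (WEtranscript σ a i) with
        | WEAction.query Y => WEtranscript σ a i ++ [a Y]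
        | WEAction.halt _ => WEtranscript σ a i) = _
      rw [hrun]
      simp only [ht]
      rw [List.take_succ, List.getElem?_eq_getElem (by simpa using hlt)]
      simp
    · show (match σ (WEtranscript σ a i) with
        | WEAction.query Y => WEqueries σ a i ++ [Y]
        | WEAction.halt _ => WEqueries σ a i) = _
      rw [hrun]
      simp only [hq]
      rw [List.take_succ, List.getElem?_eq_getElem hlt]
      simp

lemma sim_final (σ : List Bool → WEAction n) (S : List (Finset (Fin n)))
    (hσ : σ = fun bs => run Finset.univ S bs) :
    σ (WEtranscript σ a ((exec a Finset.univ S).1.length)) =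
      .halt (exec a Finset.univ S).2 ∧
    WEqueries σ a ((exec a Finset.univ S).1.length) = (exec a Finset.univ S).1 := by
  obtain ⟨ht, hq⟩ := sim σ S hσ ((exec a Finset.univ S).1.length) le_rfl
  constructor
  · rw [ht]
    have : (((exec a Finset.univ S).1.map a).take ((exec a Finset.univ S).1.length))
        = (exec a Finset.univ S).1.map a := by
      apply List.take_of_length_le; simp
    rw [this, hσ]
    exact run_halt S Finset.univ
  · rw [hq]
    exact List.take_of_length_le le_rfl

section arith

lemma g_zero {g : ℕ → ℕ} (hg : ∀ a b, g a + g b ≤ g (a + b)) : g 0 = 0 := by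
  have h := hg 0 0; simp at h; omega

lemma g_mono {g : ℕ → ℕ} (hg : ∀ a b, g a + g b ≤ g (a + b)) :
    ∀ {a b : ℕ}, a ≤ b → g a ≤ g b := by
  intro a b h
  have h2 := hg a (b - a)
  have e : a + (b - a) = b := by omega
  rw [e] at h2; omega

lemma chunk_aux {g : ℕ → ℕ} (hg : ∀ a b, g a + g b ≤ g (a + b)) (n : ℕ) (hn : 1 ≤ n) :
    ∀ (l : List ℕ) (acc : ℕ), acc ≤ n → (∀ s ∈ l, s ≤ n) →
      g acc + (l.map g).sum ≤ ((acc + l.sum) / n + 1) * g (2 * n) := by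
  intro l
  induction l with
  | nil =>
    intro acc hacc _
    simp only [List.map_nil, List.sum_nil, add_zero]
    calc g acc ≤ g (2 * n) := g_mono hg (by omega)
    _ ≤ (acc / n + 1) * g (2 * n) :=
        Nat.le_mul_of_pos_left (g (2 * n)) (Nat.succ_pos _)
  | cons s l ih =>
    intro acc hacc hl
    have hs : s ≤ n := hl s (by simp)
    have hl' : ∀ x ∈ l, x ≤ n := fun x hx => hl x (by simp [hx])
    simp only [List.map_cons, List.sum_cons]
    by_cases hcase : acc + s ≤ n
    · have h1 := ih (acc + s) hcase hl'
      have h2 : g acc + g s ≤ g (acc + s) := hg acc s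
      have e : acc + s + l.sum = acc + (s + l.sum) := by omega
      rw [e] at h1
      omega
    · have h2 : g acc + g s ≤ g (2 * n) := (hg acc s).trans (g_mono hg (by omega))
      have h3 := ih 0 (by omega) hl'
      rw [g_zero hg, zero_add, zero_add] at h3
      have hdiv : l.sum / n + 1 ≤ (acc + (s + l.sum)) / n := by
        have h4 : l.sum + n ≤ acc + (s + l.sum) := by omega
        calc l.sum / n + 1 = (l.sum + n) / n := by rw [Nat.add_div_right _ (by omega)]
        _ ≤ (acc + (s + l.sum)) / n := Nat.div_le_div_right h4
      have h5 : (l.sum / n + 1 + 1) * g (2 * n) ≤ ((acc + (s + l.sum)) / n + 1) * g (2 * n) := by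
        apply Nat.mul_le_mul_right; omega
      have h6 : (l.sum / n + 1 + 1) * g (2 * n) = (l.sum / n + 1) * g (2 * n) + g (2 * n) := by
        ring
      omega

lemma chunk {g : ℕ → ℕ} (hg : ∀ a b, g a + g b ≤ g (a + b)) (n : ℕ) (hn : 1 ≤ n)
    (l : List ℕ) (hl : ∀ s ∈ l, s ≤ n) :
    (l.map g).sum ≤ (l.sum / n + 1) * g (2 * n) := by
  have := chunk_aux hg n hn l 0 (by omega) hl
  rw [g_zero hg, zero_add, zero_add] at this
  exact this

lemma AR1b (k : ℕ) (R m : ℕ) (hm : m < 2 * k) :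
    ∑ j ∈ Finset.range R, (if 2 ^ (j + 1) * k ≤ m then 2 ^ j else 0) = 0 := by
  apply Finset.sum_eq_zero
  intro j _
  have h2 : 2 ≤ 2 ^ (j + 1) := by
    calc 2 = 2 ^ 1 := by norm_num
    _ ≤ 2 ^ (j + 1) := Nat.pow_le_pow_right (by norm_num) (by omega)
  have : ¬ (2 ^ (j + 1) * k ≤ m) := by
    intro hc
    have : 2 * k ≤ 2 ^ (j + 1) * k := Nat.mul_le_mul_right k h2
    omega
  simp [this]

lemma AR1a (k : ℕ) (hk : 1 ≤ k) :
    ∀ (R m : ℕ), 2 * k ≤ m →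
      k * ((∑ j ∈ Finset.range R, (if 2 ^ (j + 1) * k ≤ m then 2 ^ j else 0)) + 1) ≤ m := by
  intro R
  induction R with
  | zero => intro m hm; simp; omega
  | succ R ih =>
    intro m hm
    rw [Finset.sum_range_succ']
    have hshift : ∀ j : ℕ, (if 2 ^ (j + 1 + 1) * k ≤ m then 2 ^ (j + 1) else 0)
        = 2 * (if 2 ^ (j + 1) * k ≤ m / 2 then 2 ^ j else 0) := by
      intro j
      have hcond : (2 ^ (j + 2) * k ≤ m) ↔ (2 ^ (j + 1) * k ≤ m / 2) := by
        rw [Nat.le_div_iff_mul_le (by norm_num : 0 < 2)]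
        have e : 2 ^ (j + 1) * k * 2 = 2 ^ (j + 2) * k := by ring
        constructor
        · intro h; omega
        · intro h; omega
      by_cases hc : 2 ^ (j + 1) * k ≤ m / 2
      · rw [if_pos ((hcond).mpr hc), if_pos hc]; ring
      · rw [if_neg (fun h => hc ((hcond).mp h)), if_neg hc]
    have hsum : ∑ j ∈ Finset.range R, (if 2 ^ (j + 1 + 1) * k ≤ m then 2 ^ (j + 1) else 0)
        = 2 * ∑ j ∈ Finset.range R, (if 2 ^ (j + 1) * k ≤ m / 2 then 2 ^ j else 0) := by
      rw [Finset.mul_sum]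
      exact Finset.sum_congr rfl (fun j _ => hshift j)
    rw [hsum]
    have hf0 : (if 2 ^ (0 + 1) * k ≤ m then 2 ^ 0 else 0) = 1 := by
      have e0 : 2 ^ (0 + 1) * k = 2 * k := by norm_num
      rw [e0, if_pos hm]
      norm_num
    rw [hf0]
    by_cases hc : 2 * k ≤ m / 2
    · have h1 := ih (m / 2) hc
      have h2 : 2 * (m / 2) ≤ m := by omega
      set S := ∑ j ∈ Finset.range R, (if 2 ^ (j + 1) * k ≤ m / 2 then 2 ^ j else 0)
      calc k * (2 * S + 1 + 1) = 2 * (k * (S + 1)) := by ring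
      _ ≤ 2 * (m / 2) := by omega
      _ ≤ m := h2
    · have hz := AR1b k R (m / 2) (by omega)
      rw [hz]
      omega

lemma AR2a (k : ℕ) (hk : 1 ≤ k) :
    ∀ (R m : ℕ),
      (∑ j ∈ Finset.range R, (if m < 2 ^ (j + 1) * k then m / 2 ^ j else 0)) ≤
        if m < 2 * k then 2 * m else 4 * k := by
  intro R
  induction R with
  | zero => intro m; simp
  | succ R ih =>
    intro m
    rw [Finset.sum_range_succ']
    have hshift : ∀ j : ℕ, (if m < 2 ^ (j + 1 + 1) * k then m / 2 ^ (j + 1) else 0)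
        = (if m / 2 < 2 ^ (j + 1) * k then (m / 2) / 2 ^ j else 0) := by
      intro j
      have hpos : 1 ≤ 2 ^ (j + 1) * k := by
        have : 0 < 2 ^ (j + 1) * k := by positivity
        omega
      have hdd : m / 2 ^ (j + 1) = (m / 2) / 2 ^ j := by
        rw [Nat.div_div_eq_div_mul, ← pow_succ']
      have hcond : (m < 2 ^ (j + 2) * k) ↔ (m / 2 < 2 ^ (j + 1) * k) := by
        have e : 2 ^ (j + 1) * k * 2 = 2 ^ (j + 2) * k := by ring
        constructor
        · intro h
          by_contra hc
          push_neg at hc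
          have : 2 * (m / 2) ≤ m := by omega
          omega
        · intro h
          have : m ≤ 2 * (m / 2) + 1 := by omega
          omega
      by_cases hc : m / 2 < 2 ^ (j + 1) * k
      · rw [if_pos (hcond.mpr hc), if_pos hc, hdd]
      · rw [if_neg (fun h => hc (hcond.mp h)), if_neg hc]
    have hsum : ∑ j ∈ Finset.range R, (if m < 2 ^ (j + 1 + 1) * k then m / 2 ^ (j + 1) else 0)
        = ∑ j ∈ Finset.range R, (if m / 2 < 2 ^ (j + 1) * k then (m / 2) / 2 ^ j else 0) :=
      Finset.sum_congr rfl (fun j _ => hshift j)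
    rw [hsum]
    have hf0 : (if m < 2 ^ (0 + 1) * k then m / 2 ^ 0 else 0) = (if m < 2 * k then m else 0) := by
      norm_num
    rw [hf0]
    have h1 := ih (m / 2)
    by_cases hm : m < 2 * k
    · have hm2 : m / 2 < 2 * k := by omega
      simp only [if_pos hm2] at h1
      simp only [if_pos hm]
      have : 2 * (m / 2) ≤ m := by omega
      omega
    · simp only [if_neg hm]
      by_cases hm2 : m / 2 < 2 * k
      · simp only [if_pos hm2] at h1
        have h2 : 2 * (m / 2) ≤ m := by omega
        have h3 : m ≤ 2 * (m / 2) + 1 := by omega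
        omega
      · simp only [if_neg hm2] at h1
        omega

lemma AR3a (k R m : ℕ) (hk : 1 ≤ k) (hR : 2 ^ R ≤ 2 * m) :
    (∑ j ∈ Finset.range R, (if m < 2 ^ (j + 1) * k then m else 0)) ≤
      (Nat.log 2 k + 2) * m := by
  set L := Nat.log 2 k with hL
  have hkL : k < 2 ^ (L + 1) := Nat.lt_pow_succ_log_self (by norm_num) k
  have hterm : ∀ j ∈ Finset.range R,
      (if m < 2 ^ (j + 1) * k then m else 0) ≤ (if R ≤ j + (L + 2) then m else 0) := by
    intro j _
    by_cases hc : m < 2 ^ (j + 1) * k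
    · have h1 : m < 2 ^ (j + L + 2) := by
        calc m < 2 ^ (j + 1) * k := hc
        _ < 2 ^ (j + 1) * 2 ^ (L + 1) :=
            Nat.mul_lt_mul_of_pos_left hkL (by positivity)
        _ = 2 ^ (j + L + 2) := by rw [← pow_add]; congr 1; omega
      have h2 : 2 ^ R < 2 ^ (j + L + 3) := by
        calc 2 ^ R ≤ 2 * m := hR
        _ < 2 * 2 ^ (j + L + 2) := by omega
        _ = 2 ^ (j + L + 3) := by rw [← pow_succ']
      have h3 : R < j + L + 3 := by
        by_contra hcon
        push_neg at hcon
        exact absurd (Nat.pow_le_pow_right (by norm_num : 1 ≤ 2) hcon) (by omega)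
      rw [if_pos hc, if_pos (by omega)]
    · rw [if_neg hc]
      split <;> omega
  calc (∑ j ∈ Finset.range R, (if m < 2 ^ (j + 1) * k then m else 0))
      ≤ ∑ j ∈ Finset.range R, (if R ≤ j + (L + 2) then m else 0) := Finset.sum_le_sum hterm
  _ = ∑ j ∈ (Finset.range R).filter (fun j => R ≤ j + (L + 2)), m := by
      rw [Finset.sum_filter]
  _ ≤ (L + 2) * m := by
      rw [Finset.sum_const, smul_eq_mul]
      apply Nat.mul_le_mul_right
      calc ((Finset.range R).filter (fun j => R ≤ j + (L + 2))).card
          ≤ (Finset.Ico (R - (L + 2)) R).card := by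
            apply Finset.card_le_card
            intro j hj
            rw [Finset.mem_filter, Finset.mem_range] at hj
            rw [Finset.mem_Ico]
            omega
      _ ≤ L + 2 := by rw [Nat.card_Ico]; omega

lemma size_sum_bound (n k R : ℕ) (hk : 1 ≤ k) (hR : 2 ^ R ≤ 2 * n) :
    (∑ j ∈ Finset.range R,
      (if 2 ^ (j + 1) * k ≤ n then 2 ^ (j + 2) * k ^ 2 else (n / 2 ^ j * n + n))) ≤
      11 * n * k := by
  have hsplit : ∀ j : ℕ,
      (if 2 ^ (j + 1) * k ≤ n then 2 ^ (j + 2) * k ^ 2 else (n / 2 ^ j * n + n)) =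
      (4 * k ^ 2) * (if 2 ^ (j + 1) * k ≤ n then 2 ^ j else 0)
        + (if n < 2 ^ (j + 1) * k then n / 2 ^ j else 0) * n
        + (if n < 2 ^ (j + 1) * k then n else 0) := by
    intro j
    by_cases hc : 2 ^ (j + 1) * k ≤ n
    · rw [if_pos hc, if_pos hc, if_neg (by omega), if_neg (by omega)]
      ring
    · rw [if_neg hc, if_neg hc, if_pos (by omega), if_pos (by omega)]
      ring
  rw [Finset.sum_congr rfl (fun j _ => hsplit j)]
  rw [Finset.sum_add_distrib, Finset.sum_add_distrib, ← Finset.mul_sum, ← Finset.sum_mul]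
  have hA : (4 * k ^ 2) * (∑ j ∈ Finset.range R, (if 2 ^ (j + 1) * k ≤ n then 2 ^ j else 0))
      ≤ 4 * n * k := by
    by_cases hn : 2 * k ≤ n
    · have h1 := AR1a k hk R n hn
      set S := ∑ j ∈ Finset.range R, (if 2 ^ (j + 1) * k ≤ n then 2 ^ j else 0)
      have e2 : k * (S + 1) = k * S + k := by ring
      have h2 : k * S ≤ n := by omega
      calc (4 * k ^ 2) * S = 4 * k * (k * S) := by ring
      _ ≤ 4 * k * n := Nat.mul_le_mul_left _ h2
      _ = 4 * n * k := by ring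
    · rw [AR1b k R n (by omega)]
      simp
  have hB : (∑ j ∈ Finset.range R, (if n < 2 ^ (j + 1) * k then n / 2 ^ j else 0)) * n
      ≤ 4 * k * n := by
    apply Nat.mul_le_mul_right
    have h1 := AR2a k hk R n
    split at h1 <;> omega
  have hC := AR3a k R n hk hR
  have hL : Nat.log 2 k ≤ k := Nat.log_le_self 2 k
  have hC2 : (∑ j ∈ Finset.range R, (if n < 2 ^ (j + 1) * k then n else 0)) ≤ 3 * k * n := by
    calc _ ≤ (Nat.log 2 k + 2) * n := hC
    _ ≤ (k + 2) * n := Nat.mul_le_mul_right _ (by omega)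
    _ ≤ 3 * k * n := Nat.mul_le_mul_right _ (by omega)
  have e : 11 * n * k = 4 * n * k + (4 * k * n + 3 * k * n) := by ring
  omega

end arith

section main
variable {n : ℕ}

lemma main_cost (F : Finset (Finset (Fin n))) (k : ℕ) (hk : 1 ≤ k)
    (W : Finset (Fin n)) (hWF : W ∈ F) (hWk : W.card ≤ k) :
    ∀ (m : ℕ) (U : Finset (Fin n)), Bcount U (2 ^ m) ≤ k →
      W ⊆ (exec (ora F) U (sched n m)).2 →
      ((exec (ora F) U (sched n m)).1.map Finset.card).sum ≤
        ∑ j ∈ Finset.range m,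
          (if 2 ^ (j + 1) * k ≤ n then 2 ^ (j + 2) * k ^ 2 else (n / 2 ^ j * n + n)) := by
  intro m
  induction m with
  | zero => intro U _ _; simp [sched, exec]
  | succ m ih =>
    intro U hB hW
    have hsched : sched n (m + 1) = level n (2 ^ m) ++ sched n m := rfl
    have hsplit := exec_append (a := ora F) (level n (2 ^ m)) (sched n m) U
    rw [hsched, hsplit] at hW ⊢
    set f1 := (exec (ora F) U (level n (2 ^ m))).2 with hf1
    set qs1 := (exec (ora F) U (level n (2 ^ m))).1 with hqs1
    set qs2 := (exec (ora F) f1 (sched n m)).1 with hqs2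
    set f2 := (exec (ora F) f1 (sched n m)).2 with hf2
    simp only [List.map_append, List.sum_append]
    -- W is inside f2 hence inside f1
    have hWf2 : W ⊆ f2 := hW
    have hWf1 : W ⊆ f1 := hWf2.trans (exec_state_subset _ _)
    have hchg : Bcount f1 (2 ^ m) ≤ k :=
      (charge F U W (2 ^ m) hWF hWf1).trans hWk
    have hsum2 : (qs2.map Finset.card).sum ≤
        ∑ j ∈ Finset.range m,
          (if 2 ^ (j + 1) * k ≤ n then 2 ^ (j + 2) * k ^ 2 else (n / 2 ^ j * n + n)) :=
      ih f1 hchg hWf2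
    -- bound the level-m cost
    have hlen2k : qs1.length ≤ 2 * k := by
      have h1 : qs1.length ≤ Bcount U (2 ^ m) := exec_level_len U (2 ^ m)
      have h2 : Bcount U (2 ^ m) ≤ 2 * Bcount U (2 ^ m * 2) := Bcount_double U (2 ^ m)
      have h3 : (2 : ℕ) ^ m * 2 = 2 ^ (m + 1) := by rw [pow_succ]
      rw [h3] at h2
      omega
    have hlendiv : qs1.length ≤ n / 2 ^ m + 1 :=
      (exec_level_len U (2 ^ m)).trans (Bcount_le_div U (2 ^ m))
    have hUn : U.card ≤ n := by
      simpa using Finset.card_le_univ U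
    have hUk : U.card ≤ k * 2 ^ (m + 1) := by
      have h1 := card_le_Bcount_mul U (2 ^ (m + 1)) (Nat.one_le_two_pow)
      have h2 : Bcount U (2 ^ (m + 1)) * 2 ^ (m + 1) ≤ k * 2 ^ (m + 1) :=
        Nat.mul_le_mul_right _ hB
      omega
    have hsize : ∀ x ∈ qs1.map Finset.card, x ≤ U.card := by
      intro x hx
      obtain ⟨Y, hY, rfl⟩ := List.mem_map.mp hx
      exact Finset.card_le_card (exec_query_subset _ _ _ hY)
    have hsum1' : (qs1.map Finset.card).sum ≤ qs1.length * U.card := by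
      have := List.sum_le_card_nsmul (qs1.map Finset.card) U.card hsize
      simpa [smul_eq_mul] using this
    have hsum1 : (qs1.map Finset.card).sum ≤
        (if 2 ^ (m + 1) * k ≤ n then 2 ^ (m + 2) * k ^ 2 else (n / 2 ^ m * n + n)) := by
      by_cases hc : 2 ^ (m + 1) * k ≤ n
      · rw [if_pos hc]
        calc (qs1.map Finset.card).sum ≤ qs1.length * U.card := hsum1'
        _ ≤ (2 * k) * (k * 2 ^ (m + 1)) := Nat.mul_le_mul hlen2k hUk
        _ = 2 ^ (m + 2) * k ^ 2 := by ring
      · rw [if_neg hc]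
        calc (qs1.map Finset.card).sum ≤ qs1.length * U.card := hsum1'
        _ ≤ (n / 2 ^ m + 1) * n := Nat.mul_le_mul hlendiv hUn
        _ = n / 2 ^ m * n + n := by ring
    rw [Finset.sum_range_succ]
    omega

lemma mem_sched_one : ∀ (m : ℕ), 1 ≤ m → ∀ J ∈ level n 1, J ∈ sched n m := by
  intro m
  induction m with
  | zero => intro h; omega
  | succ m ih =>
    intro _ J hJ
    by_cases hm : 1 ≤ m
    · exact List.mem_append_right _ (ih hm J hJ)
    · have hm0 : m = 0 := by omega
      subst hm0
      have : (2 : ℕ) ^ 0 = 1 := by norm_num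
      rw [show sched n 1 = level n (2 ^ 0) ++ sched n 0 from rfl, this]
      exact List.mem_append_left _ hJ

lemma final_mem (F : Finset (Finset (Fin n))) (hF : F.Nonempty) (R : ℕ) (hR1 : 1 ≤ R) :
    (exec (ora F) Finset.univ (sched n R)).2 ∈ F := by
  set f := (exec (ora F) Finset.univ (sched n R)).2 with hf
  obtain ⟨W0, hW0⟩ := hF
  obtain ⟨W, hWF, hWf⟩ := exec_witness F (sched n R) Finset.univ
    ⟨W0, hW0, Finset.subset_univ _⟩
  have hfW : f ⊆ W := by
    intro x hxf
    by_contra hxW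
    have hJ : blk n 1 x.val ∈ sched n R :=
      mem_sched_one R hR1 _ (List.mem_map.mpr ⟨x.val, List.mem_range.mpr x.isLt, rfl⟩)
    have hxblk : x ∈ blk n 1 x.val := by simp [blk]
    have hne : (f ∩ blk n 1 x.val).Nonempty := ⟨x, Finset.mem_inter.mpr ⟨hxf, hxblk⟩⟩
    obtain ⟨U', hfU', _, hfalse⟩ := exec_cert (a := ora F) _ Finset.univ _ hJ hne
    have hWsub : W ⊆ U' \ blk n 1 x.val := by
      intro y hy
      rw [Finset.mem_sdiff]
      refine ⟨hfU' (hWf hy), fun hyb => ?_⟩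
      have : y.val = x.val := by
        have := hyb
        simp only [blk, Finset.mem_filter, Nat.div_one] at this
        exact this.2
      exact hxW (Fin.ext this ▸ hy)
    have hct : ora F (U' \ blk n 1 x.val) = true := by
      simp only [ora, decide_eq_true_eq]
      exact ⟨W, hWF, hWsub⟩
    rw [hfalse] at hct
    exact Bool.false_ne_true hct
  have : f = W := Finset.Subset.antisymm hfW hWf
  rw [this]
  exact hWF

end main

end WEProof

/-- Theorem 1 (total-running-time part) / Lemma 2: there is an absolute
constant `c > 0` such that for all `n ≥ k ≥ 1` there is a deterministic
adaptive strategy `σ` depending only on `n` such that for every nonempty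
family `F` of subsets of `{1,…,n}`, each of size at most `k`, and every
superadditive `g : ℕ → ℕ`, running `σ` with each query `Y` answered by
whether some `W ∈ F` satisfies `W ⊆ Y` halts with output a member of `F`,
and the queries `Y_1, …, Y_m` made satisfy `∑ i, g |Y_i| ≤ c·k·g(2n)`. -/
theorem deterministic_witness_extraction_runtime :
    ∃ c : ℝ, 0 < c ∧
      ∀ n : ℕ, 1 ≤ n →
        ∃ σ : List Bool → WEAction n,
          ∀ k : ℕ, 1 ≤ k → k ≤ n →
            ∀ F : Finset (Finset (Fin n)), F.Nonempty →
              (∀ W ∈ F, W.card ≤ k) →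
              ∀ g : ℕ → ℕ, (∀ a b : ℕ, g a + g b ≤ g (a + b)) →
                ∃ (m : ℕ) (W : Finset (Fin n)),
                  σ (WEtranscript σ (fun Y => decide (∃ W' ∈ F, W' ⊆ Y)) m) =
                      WEAction.halt W ∧
                  W ∈ F ∧
                  (((WEqueries σ (fun Y => decide (∃ W' ∈ F, W' ⊆ Y)) m).map
                      (fun Y => g Y.card)).sum : ℝ) ≤
                    c * k * g (2 * n) := by
  refine ⟨12, by norm_num, ?_⟩
  intro n hn
  set R := max 1 (Nat.clog 2 n) with hRdef
  have hR1 : 1 ≤ R := le_max_left _ _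
  have hRn : n ≤ 2 ^ R :=
    (Nat.le_pow_clog (by norm_num) n).trans
      (Nat.pow_le_pow_right (by norm_num) (le_max_right _ _))
  have hR2n : 2 ^ R ≤ 2 * n := by
    rcases eq_or_lt_of_le hn with h1 | h1
    · have : Nat.clog 2 n = 0 := by rw [← h1]; exact Nat.clog_one_right 2
      rw [hRdef, this]
      norm_num
      omega
    · have hc : 1 < n := h1
      have hclog : 0 < Nat.clog 2 n := Nat.clog_pos (by norm_num) hc
      have hRe : R = Nat.clog 2 n := by rw [hRdef]; omega
      have hlt : 2 ^ (R - 1) < n := by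
        rw [hRe]
        exact Nat.pow_pred_clog_lt_self (by norm_num) hc
      have he : 2 ^ R = 2 * 2 ^ (R - 1) := by
        have e1 : R - 1 + 1 = R := by omega
        calc 2 ^ R = 2 ^ (R - 1 + 1) := by rw [e1]
        _ = 2 * 2 ^ (R - 1) := by rw [pow_succ']
      omega
  refine ⟨fun bs => WEProof.run Finset.univ (WEProof.sched n R) bs, ?_⟩
  intro k hk hkn F hF hFk g hg
  set σ : List Bool → WEAction n := fun bs => WEProof.run Finset.univ (WEProof.sched n R) bs
    with hσ
  set a : Finset (Fin n) → Bool := fun Y => decide (∃ W' ∈ F, W' ⊆ Y) with ha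
  have haF : a = WEProof.ora F := rfl
  set qs := (WEProof.exec a Finset.univ (WEProof.sched n R)).1 with hqs
  set f := (WEProof.exec a Finset.univ (WEProof.sched n R)).2 with hf
  obtain ⟨hhalt, hqueries⟩ := WEProof.sim_final (a := a) σ (WEProof.sched n R) hσ
  have hfF : f ∈ F := by
    rw [hf, haF]
    exact WEProof.final_mem F hF R hR1
  refine ⟨qs.length, f, hhalt, hfF, ?_⟩
  rw [hqueries]
  -- the size list
  set l : List ℕ := qs.map Finset.card with hl
  have hsl : ∀ s ∈ l, s ≤ n := by
    intro s hs
    obtain ⟨Y, hY, rfl⟩ := List.mem_map.mp hs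
    have h1 : Y ⊆ Finset.univ := WEProof.exec_query_subset _ _ _ hY
    simpa using Finset.card_le_univ Y
  have hBtop : WEProof.Bcount Finset.univ (2 ^ R) ≤ k :=
    (WEProof.Bcount_top Finset.univ R hRn).trans hk
  have hsum : l.sum ≤ 11 * n * k := by
    have h1 := WEProof.main_cost F k hk f hfF (hFk f hfF) R Finset.univ hBtop
      (by rw [← haF, ← hf])
    rw [← haF] at h1
    exact h1.trans (WEProof.size_sum_bound n k R hk hR2n)
  have hcost : (l.map g).sum ≤ 12 * k * g (2 * n) := by
    have h1 := WEProof.chunk hg n hn l hsl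
    have h2 : l.sum / n ≤ 11 * k := by
      calc l.sum / n ≤ (11 * k * n) / n := Nat.div_le_div_right (by
        calc l.sum ≤ 11 * n * k := hsum
        _ = 11 * k * n := by ring)
      _ = 11 * k := Nat.mul_div_cancel _ (by omega)
    calc (l.map g).sum ≤ (l.sum / n + 1) * g (2 * n) := h1
    _ ≤ (12 * k) * g (2 * n) := Nat.mul_le_mul_right _ (by omega)
    _ = 12 * k * g (2 * n) := by ring
  have hmm : qs.map (fun Y => g Y.card) = l.map g := by
    rw [hl, List.map_map]
    rfl
  rw [hmm]
  calc ((l.map g).sum : ℝ) ≤ ((12 * k * g (2 * n) : ℕ) : ℝ) := by exact_mod_cast hcost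
  _ = 12 * k * g (2 * n) := by push_cast; ring
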